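/- (Entropy–Laplace duality inequality) For a probability measure ν, f ∈ L²(ν), and g bounded measurable, ∫ f² g dν ≤ Ent_ν(f²) + ‖f‖²_{L²(ν)} log (∫ e^g dν), where Ent_ν(f²) = ∫ f² log f² dν − ‖f‖²_{L²(ν)} log ‖f‖²_{L²(ν)}. -/

import Mathlib

open MeasureTheory

lemma young_ineq_aux (u v : ℝ) (hu : 0 ≤ u) :
    u * v ≤ u * Real.log u - u + Real.exp v := by
  rcases eq_or_lt_of_le hu with h | h
  · simp [← h]
    positivity
  · have h1 : v - Real.log u + 1 ≤ Real.exp (v - Real.log u) := Real.add_one_le_exp _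
    have h2 : u * (v - Real.log u + 1) ≤ u * Real.exp (v - Real.log u) :=
      mul_le_mul_of_nonneg_left h1 hu
    have h3 : u * Real.exp (v - Real.log u) = Real.exp v := by
      rw [Real.exp_sub, Real.exp_log h]
      field_simp
    nlinarith

theorem entropy_laplace_duality_inequality
    {α : Type*} [MeasurableSpace α] (ν : Measure α) [IsProbabilityMeasure ν]
    (f g : α → ℝ) (hf : MemLp f 2 ν)
    (hflog : Integrable (fun x => f x ^ 2 * Real.log (f x ^ 2)) ν)
    (hg : Measurable g) (C : ℝ) (hgC : ∀ x, |g x| ≤ C) :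
    (∫ x, f x ^ 2 * g x ∂ν) ≤
      ((∫ x, f x ^ 2 * Real.log (f x ^ 2) ∂ν) -
          (∫ x, f x ^ 2 ∂ν) * Real.log (∫ x, f x ^ 2 ∂ν)) +
        (∫ x, f x ^ 2 ∂ν) * Real.log (∫ x, Real.exp (g x) ∂ν) := by
  have hintf2 : Integrable (fun x => f x ^ 2) ν := hf.integrable_sq
  set A := ∫ x, f x ^ 2 ∂ν with hA
  set E := ∫ x, Real.exp (g x) ∂ν with hEdef
  have hEint : Integrable (fun x => Real.exp (g x)) ν := by
    refine Integrable.mono' (integrable_const (Real.exp C)) (hg.exp.aestronglyMeasurable) ?_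
    filter_upwards with x
    rw [Real.norm_eq_abs, abs_of_pos (Real.exp_pos _)]
    exact Real.exp_le_exp.mpr ((abs_le.mp (hgC x)).2)
  have hEpos : 0 < E := by
    have h1 : Real.exp (-C) = ∫ _x, Real.exp (-C) ∂ν := by simp
    have h2 : (∫ _x, Real.exp (-C) ∂ν) ≤ E :=
      integral_mono (integrable_const _) hEint fun x =>
        Real.exp_le_exp.mpr (neg_le_of_abs_le (hgC x))
    linarith [Real.exp_pos (-C)]
  have hA0 : 0 ≤ A := integral_nonneg fun x => sq_nonneg _
  have hfgint : Integrable (fun x => f x ^ 2 * g x) ν := by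
    have := hintf2.bdd_mul hg.aestronglyMeasurable (c := C) (Filter.Eventually.of_forall fun x => by
      rw [Real.norm_eq_abs]; exact hgC x)
    exact this.congr (by filter_upwards with x; ring)
  rcases eq_or_lt_of_le hA0 with h0 | hApos
  · have hae : (fun x => f x ^ 2) =ᵐ[ν] 0 :=
      (integral_eq_zero_iff_of_nonneg (fun x => sq_nonneg (f x)) hintf2).mp h0.symm
    have h1 : (∫ x, f x ^ 2 * g x ∂ν) = 0 :=
      integral_eq_zero_of_ae (by filter_upwards [hae] with x hx; simp [hx])
    have h2 : (∫ x, f x ^ 2 * Real.log (f x ^ 2) ∂ν) = 0 :=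
      integral_eq_zero_of_ae (by filter_upwards [hae] with x hx; simp [hx])
    rw [h1, h2, ← h0]
    simp
  · set c := Real.log (A / E) with hc
    have hexpc : Real.exp c = A / E := Real.exp_log (div_pos hApos hEpos)
    have hpt : ∀ x, f x ^ 2 * (g x + c) ≤
        f x ^ 2 * Real.log (f x ^ 2) - f x ^ 2 + Real.exp (g x + c) := fun x =>
      young_ineq_aux _ _ (sq_nonneg _)
    have hLint : Integrable (fun x => f x ^ 2 * (g x + c)) ν := by
      have := hfgint.add (hintf2.const_mul c)
      exact this.congr (by filter_upwards with x; simp only [Pi.add_apply]; ring)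
    have hexpgc : Integrable (fun x => Real.exp (g x + c)) ν := by
      have := hEint.mul_const (Real.exp c)
      exact this.congr (by filter_upwards with x; rw [Real.exp_add])
    have hsub : Integrable (fun x => f x ^ 2 * Real.log (f x ^ 2) - f x ^ 2) ν :=
      (hflog.sub hintf2).congr (by filter_upwards with x; simp [Pi.sub_apply])
    have hRint : Integrable
        (fun x => f x ^ 2 * Real.log (f x ^ 2) - f x ^ 2 + Real.exp (g x + c)) ν :=
      hsub.add hexpgc
    have hint := integral_mono hLint hRint hpt
    have hL : (∫ x, f x ^ 2 * (g x + c) ∂ν) = (∫ x, f x ^ 2 * g x ∂ν) + c * A := by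
      have heq : (fun x => f x ^ 2 * (g x + c)) =
          fun x => f x ^ 2 * g x + c * f x ^ 2 := by funext x; ring
      rw [heq, integral_add hfgint (hintf2.const_mul c), integral_const_mul c fun x => f x ^ 2]
    have hR : (∫ x, (f x ^ 2 * Real.log (f x ^ 2) - f x ^ 2 + Real.exp (g x + c)) ∂ν) =
        (∫ x, f x ^ 2 * Real.log (f x ^ 2) ∂ν) - A + (A / E) * E := by
      rw [integral_add hsub hexpgc, integral_sub hflog hintf2]
      congr 1
      have heq : (fun x => Real.exp (g x + c)) = fun x => Real.exp (g x) * Real.exp c := by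
        funext x; rw [Real.exp_add]
      rw [heq, integral_mul_const, hexpc, mul_comm]
    rw [hL, hR] at hint
    have hc' : c = Real.log A - Real.log E := Real.log_div (ne_of_gt hApos) (ne_of_gt hEpos)
    have hAE : A / E * E = A := div_mul_cancel₀ A (ne_of_gt hEpos)
    rw [hAE] at hint
    nlinarith
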